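/- In Euclidean space E^1 = R, let L^0 be a nonempty set of points and let Pt be the free abelian group on closed intervals [p, p'] with p < p' both in L^0, modulo the relation [p, p''] = [p, p'] + [p', p''] whenever p < p' < p'' are in L^0. Then the map sending [p, p'] to the element [p'] - [p] of the augmentation ideal ker(ε : Z⟨L^0⟩ → Z) is an isomorphism of abelian groups. -/

import Mathlib

/-- Generators: intervals `[p, p']` with `p < p'` both in `L0`. -/
def IntervalGen (L0 : Set ℝ) : Type :=
  {q : ↥L0 × ↥L0 // (q.1 : ℝ) < (q.2 : ℝ)}

/-- The subgroup of relations `[p,p''] = [p,p'] + [p',p'']`. -/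
def IntervalRel (L0 : Set ℝ) : AddSubgroup (FreeAbelianGroup (IntervalGen L0)) :=
  AddSubgroup.closure
    {z | ∃ (p p' p'' : ↥L0) (h1 : (p : ℝ) < (p' : ℝ)) (h2 : (p' : ℝ) < (p'' : ℝ)),
      z = FreeAbelianGroup.of (⟨(p, p''), lt_trans h1 h2⟩ : IntervalGen L0)
        - FreeAbelianGroup.of (⟨(p, p'), h1⟩ : IntervalGen L0)
        - FreeAbelianGroup.of (⟨(p', p''), h2⟩ : IntervalGen L0)}

/-- The polytope group of `L0`-intervals in `E¹`. -/
def IntervalPt (L0 : Set ℝ) : Type :=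
  FreeAbelianGroup (IntervalGen L0) ⧸ IntervalRel L0

instance (L0 : Set ℝ) : AddCommGroup (IntervalPt L0) :=
  QuotientAddGroup.Quotient.addCommGroup (IntervalRel L0)

/-- The augmentation `ℤ⟨L0⟩ → ℤ`. -/
noncomputable def aug (L0 : Set ℝ) : (↥L0 →₀ ℤ) →+ ℤ :=
  Finsupp.liftAddHom fun _ => AddMonoidHom.id ℤ

namespace ST17

open FreeAbelianGroup

noncomputable section

variable (L0 : Set ℝ)

/-- The "value" of a generator in the augmentation ideal. -/
def genMap (q : IntervalGen L0) : (aug L0).ker :=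
  ⟨Finsupp.single q.1.2 1 - Finsupp.single q.1.1 1, by
    simp [AddMonoidHom.mem_ker, aug, map_sub, Finsupp.liftAddHom_apply_single]⟩

/-- The forward map on the free abelian group. -/
def phi0 : FreeAbelianGroup (IntervalGen L0) →+ (aug L0).ker :=
  FreeAbelianGroup.lift (genMap L0)

lemma phi0_vanish : ∀ z ∈ IntervalRel L0, phi0 L0 z = 0 := by
  intro z hz
  have : IntervalRel L0 ≤ (phi0 L0).ker := by
    rw [IntervalRel, AddSubgroup.closure_le]
    rintro w ⟨p, p', p'', h1, h2, rfl⟩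
    simp only [SetLike.mem_coe, AddMonoidHom.mem_ker, map_sub, phi0, FreeAbelianGroup.lift_apply_of]
    show FreeAbelianGroup.lift (genMap L0) (_ - _ - _) = 0
    erw [map_sub, map_sub, FreeAbelianGroup.lift_apply_of, FreeAbelianGroup.lift_apply_of,
      FreeAbelianGroup.lift_apply_of]
    apply Subtype.ext
    simp only [AddSubgroup.coe_sub, AddSubgroup.coe_zero, genMap]
    abel
  exact this hz

/-- The forward map on the quotient. -/
def phi : IntervalPt L0 →+ (aug L0).ker :=
  QuotientAddGroup.lift (IntervalRel L0) (phi0 L0) (phi0_vanish L0)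

lemma phi_mk (q : IntervalGen L0) :
    phi L0 (QuotientAddGroup.mk (FreeAbelianGroup.of q)) = genMap L0 q := by
  have h1 : phi L0 (QuotientAddGroup.mk (FreeAbelianGroup.of q)) = phi0 L0 (FreeAbelianGroup.of q) := rfl
  rw [h1, phi0]
  exact FreeAbelianGroup.lift_apply_of _ _

/-- The quotient map as an `AddMonoidHom`. -/
def mkI : FreeAbelianGroup (IntervalGen L0) →+ IntervalPt L0 :=
  QuotientAddGroup.mk' (IntervalRel L0)

lemma mkI_eq (z : FreeAbelianGroup (IntervalGen L0)) :
    mkI L0 z = QuotientAddGroup.mk z := rfl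

lemma mk_rel {p p' p'' : ↥L0} (h1 : (p : ℝ) < (p' : ℝ)) (h2 : (p' : ℝ) < (p'' : ℝ))
    (h3 : (p : ℝ) < (p'' : ℝ)) :
    mkI L0 (of (⟨(p, p''), h3⟩ : IntervalGen L0)) =
      mkI L0 (of (⟨(p, p'), h1⟩ : IntervalGen L0))
        + mkI L0 (of (⟨(p', p''), h2⟩ : IntervalGen L0)) := by
  have hmem : of (⟨(p, p''), h3⟩ : IntervalGen L0)
      - of (⟨(p, p'), h1⟩ : IntervalGen L0)
      - of (⟨(p', p''), h2⟩ : IntervalGen L0) ∈ IntervalRel L0 :=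
    AddSubgroup.subset_closure ⟨p, p', p'', h1, h2, rfl⟩
  have h0 : mkI L0 (of (⟨(p, p''), h3⟩ : IntervalGen L0)
      - of (⟨(p, p'), h1⟩ : IntervalGen L0)
      - of (⟨(p', p''), h2⟩ : IntervalGen L0)) = 0 :=
    (QuotientAddGroup.eq_zero_iff _).mpr hmem
  erw [map_sub, map_sub, sub_sub, sub_eq_zero] at h0
  exact h0

/-- Signed interval from `a` to `b`. -/
def J (a b : ↥L0) : IntervalPt L0 :=
  if h : (a : ℝ) < (b : ℝ) then mkI L0 (of (⟨(a, b), h⟩ : IntervalGen L0))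
  else if h' : (b : ℝ) < (a : ℝ) then - mkI L0 (of (⟨(b, a), h'⟩ : IntervalGen L0))
  else 0

lemma J_self (a : ↥L0) : J L0 a a = 0 := by simp [J]

lemma J_lt {a b : ↥L0} (h : (a : ℝ) < (b : ℝ)) :
    J L0 a b = mkI L0 (of (⟨(a, b), h⟩ : IntervalGen L0)) := dif_pos h

lemma J_gt {a b : ↥L0} (h : (b : ℝ) < (a : ℝ)) :
    J L0 a b = - mkI L0 (of (⟨(b, a), h⟩ : IntervalGen L0)) := by
  unfold J
  rw [dif_neg (asymm h), dif_pos h]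

lemma J_symm (a b : ↥L0) : J L0 a b + J L0 b a = 0 := by
  rcases lt_trichotomy (a : ℝ) (b : ℝ) with h | h | h
  · rw [J_lt _ h, J_gt _ h, add_neg_cancel]
  · obtain rfl : a = b := Subtype.ext h
    rw [J_self, add_zero]
  · rw [J_gt _ h, J_lt _ h, neg_add_cancel]

lemma J_add (a b c : ↥L0) : J L0 a b + J L0 b c = J L0 a c := by
  rcases lt_trichotomy (a : ℝ) (b : ℝ) with hab | hab | hab
  · rcases lt_trichotomy (b : ℝ) (c : ℝ) with hbc | hbc | hbc
    · rw [J_lt _ hab, J_lt _ hbc, J_lt _ (hab.trans hbc),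
        mk_rel L0 hab hbc (hab.trans hbc)]
    · obtain rfl : b = c := Subtype.ext hbc
      rw [J_self, add_zero]
    · rcases lt_trichotomy (a : ℝ) (c : ℝ) with hac | hac | hac
      · rw [J_lt _ hab, J_gt _ hbc, J_lt _ hac, mk_rel L0 hac hbc hab]
        abel
      · obtain rfl : a = c := Subtype.ext hac
        rw [J_self]
        exact J_symm L0 a b
      · rw [J_lt _ hab, J_gt _ hbc, J_gt _ hac, mk_rel L0 hac hab hbc]
        abel
  · obtain rfl : a = b := Subtype.ext hab
    rw [J_self, zero_add]
  · rcases lt_trichotomy (b : ℝ) (c : ℝ) with hbc | hbc | hbc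
    · rcases lt_trichotomy (a : ℝ) (c : ℝ) with hac | hac | hac
      · rw [J_gt _ hab, J_lt _ hbc, J_lt _ hac, mk_rel L0 hab hac hbc]
        abel
      · obtain rfl : a = c := Subtype.ext hac
        rw [J_self]
        exact J_symm L0 a b
      · rw [J_gt _ hab, J_lt _ hbc, J_gt _ hac, mk_rel L0 hbc hac hab]
        abel
    · obtain rfl : b = c := Subtype.ext hbc
      rw [J_self, add_zero]
    · have hac : (c : ℝ) < (a : ℝ) := hbc.trans hab
      rw [J_gt _ hab, J_gt _ hbc, J_gt _ hac, mk_rel L0 hbc hab hac]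
      abel

lemma J_sub (p0 a b : ↥L0) : J L0 p0 b - J L0 p0 a = J L0 a b := by
  have h1 := J_add L0 a p0 b
  have h2 : J L0 a p0 = - J L0 p0 a := eq_neg_of_add_eq_zero_left (J_symm L0 a p0)
  rw [← h1, h2]
  abel

/-- The inverse map on finsupps, relative to a base point `p0`. -/
def psi0 (p0 : ↥L0) : (↥L0 →₀ ℤ) →+ IntervalPt L0 :=
  Finsupp.liftAddHom fun q => zmultiplesHom _ (J L0 p0 q)

lemma psi0_single (p0 q : ↥L0) (n : ℤ) :
    psi0 L0 p0 (Finsupp.single q n) = n • J L0 p0 q := by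
  simp [psi0, Finsupp.liftAddHom_apply_single, zmultiplesHom_apply]

lemma phi_J (a b : ↥L0) :
    ((phi L0 (J L0 a b) : (aug L0).ker) : ↥L0 →₀ ℤ)
      = Finsupp.single b 1 - Finsupp.single a 1 := by
  rcases lt_trichotomy (a : ℝ) (b : ℝ) with h | h | h
  · rw [J_lt _ h, mkI_eq]; erw [phi_mk]
    rfl
  · obtain rfl : a = b := Subtype.ext h
    rw [J_self, map_zero, sub_self]
    rfl
  · rw [J_gt _ h, map_neg, mkI_eq]; erw [phi_mk]
    have : ((genMap L0 (⟨(b, a), h⟩ : IntervalGen L0) : (aug L0).ker) : ↥L0 →₀ ℤ)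
        = Finsupp.single a 1 - Finsupp.single b 1 := rfl
    rw [AddSubgroup.coe_neg, this]
    abel

lemma key (p0 : ↥L0) (f : ↥L0 →₀ ℤ) :
    ((phi L0 (psi0 L0 p0 f) : (aug L0).ker) : ↥L0 →₀ ℤ)
      = f - (aug L0 f) • Finsupp.single p0 1 := by
  induction f using Finsupp.induction_linear with
  | zero => simp
  | add f g hf hg =>
    rw [map_add, map_add, AddSubgroup.coe_add, hf, hg, map_add, add_smul]
    abel
  | single q n =>
    rw [psi0_single, map_zsmul]
    have hcoe : ((n • (phi L0 (J L0 p0 q)) : (aug L0).ker) : ↥L0 →₀ ℤ)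
        = n • ((phi L0 (J L0 p0 q) : (aug L0).ker) : ↥L0 →₀ ℤ) := rfl
    rw [hcoe, phi_J]
    have haug : aug L0 (Finsupp.single q n) = n := by
      simp [aug, Finsupp.liftAddHom_apply_single]
    rw [haug, smul_sub, Finsupp.smul_single, smul_eq_mul, mul_one]

lemma left_inv (p0 : ↥L0) (x : IntervalPt L0) :
    psi0 L0 p0 ((phi L0 x : (aug L0).ker) : ↥L0 →₀ ℤ) = x := by
  induction x using QuotientAddGroup.induction_on with
  | H z =>
    induction z using FreeAbelianGroup.induction_on with
    | zero =>
      show psi0 L0 p0 ((phi L0 ((0 : IntervalPt L0)) : (aug L0).ker) : ↥L0 →₀ ℤ)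
        = (0 : IntervalPt L0)
      simp
    | of q =>
      obtain ⟨⟨p, p'⟩, h⟩ := q
      erw [phi_mk]
      have : ((genMap L0 (⟨(p, p'), h⟩ : IntervalGen L0) : (aug L0).ker) : ↥L0 →₀ ℤ)
          = Finsupp.single p' 1 - Finsupp.single p 1 := rfl
      rw [this, map_sub, psi0_single, psi0_single, one_smul, one_smul, J_sub, J_lt _ h]
      rfl
    | neg q hq =>
      have hneg : (QuotientAddGroup.mk (-of q) : IntervalPt L0)
          = - QuotientAddGroup.mk (of q) := rfl
      erw [hneg, map_neg, AddSubgroup.coe_neg, map_neg, hq]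
      rfl
    | add y z hy hz =>
      have hadd : (QuotientAddGroup.mk (y + z) : IntervalPt L0)
          = QuotientAddGroup.mk y + QuotientAddGroup.mk z := rfl
      erw [hadd, map_add, AddSubgroup.coe_add, map_add, hy, hz]
      rfl

lemma right_inv (p0 : ↥L0) (y : (aug L0).ker) :
    phi L0 (psi0 L0 p0 (y : ↥L0 →₀ ℤ)) = y := by
  apply Subtype.ext
  rw [key]
  have : aug L0 (y : ↥L0 →₀ ℤ) = 0 := y.2
  rw [this, zero_smul, sub_zero]

end

end ST17

/-- Base case `n = 1` of the Solomon–Tits theorem for Euclidean polytopes: the group of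
`L0`-intervals, modulo subdivision, is isomorphic to the augmentation ideal of `ℤ⟨L0⟩` via
`[p, p'] ↦ [p'] - [p]`. -/
theorem stmt_17 (L0 : Set ℝ) (hL0 : L0.Nonempty) :
    ∃ φ : IntervalPt L0 ≃+ (aug L0).ker,
      ∀ (p p' : ↥L0) (h : (p : ℝ) < (p' : ℝ)),
        ((φ (QuotientAddGroup.mk
            (FreeAbelianGroup.of (⟨(p, p'), h⟩ : IntervalGen L0))) : (aug L0).ker) : ↥L0 →₀ ℤ)
          = Finsupp.single p' 1 - Finsupp.single p 1 := by
  classical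
  obtain ⟨p0v, hp0⟩ := hL0
  set p0 : ↥L0 := ⟨p0v, hp0⟩
  refine ⟨{ toFun := ST17.phi L0
            invFun := fun y => ST17.psi0 L0 p0 (y : ↥L0 →₀ ℤ)
            left_inv := ST17.left_inv L0 p0
            right_inv := ST17.right_inv L0 p0
            map_add' := map_add (ST17.phi L0) }, ?_⟩
  intro p p' h
  show ((ST17.phi L0 (QuotientAddGroup.mk
      (FreeAbelianGroup.of (⟨(p, p'), h⟩ : IntervalGen L0))) : (aug L0).ker) : ↥L0 →₀ ℤ)
    = Finsupp.single p' 1 - Finsupp.single p 1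
  erw [ST17.phi_mk]
  rfl
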